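/- Equality-pattern extension: let Δ be a type environment, τ a type, and v₁ a concrete value of type σ₁(τ). If δ₁ ⇌_Δ δ₂ and for every type variable α the size |σ₂(α)| is at least the maximum number of α-occurrences in the extended environment Δ, x:τ, then there exists a concrete value v₂ of type σ₂(τ) such that (δ₁, x ↦ v₁) ⇌_{Δ, x:τ} (δ₂, x ↦ v₂). -/

import Mathlib

/-- Polymorphic types: Unit, Sum, Prod, and type variables. -/
inductive PTy : Type
  | unit : PTy
  | sum : PTy → PTy → PTy
  | prod : PTy → PTy → PTy
  | var : ℕ → PTy
deriving DecidableEq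

/-- Apply a type-variable substitution. -/
def psubst (σ : ℕ → PTy) : PTy → PTy
  | .unit => .unit
  | .sum a b => .sum (psubst σ a) (psubst σ b)
  | .prod a b => .prod (psubst σ a) (psubst σ b)
  | .var n => σ n

/-- Concrete values. -/
inductive Val : Type
  | sole : Val
  | vleft : Val → Val
  | vright : Val → Val
  | vpair : Val → Val → Val
deriving DecidableEq

/-- Typing of concrete values. -/
inductive HasTy : Val → PTy → Prop
  | sole : HasTy .sole .unit
  | vleft {v a b} : HasTy v a → HasTy (.vleft v) (.sum a b)
  | vright {v a b} : HasTy v b → HasTy (.vright v) (.sum a b)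
  | vpair {v w a b} : HasTy v a → HasTy w b → HasTy (.vpair v w) (.prod a b)

/-- A type is monomorphic (contains no type variables). -/
def Mono : PTy → Prop
  | .unit => True
  | .sum a b => Mono a ∧ Mono b
  | .prod a b => Mono a ∧ Mono b
  | .var _ => False

/-- Shells: values with holes at type-variable positions. -/
inductive Shell : Type
  | sole : Shell
  | sleft : Shell → Shell
  | sright : Shell → Shell
  | spair : Shell → Shell → Shell
  | hole : ℕ → Shell
deriving DecidableEq

/-- The shell of a value at a (possibly polymorphic) type. -/
def shell : PTy → Val → Shell
  | .var n, _ => .hole n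
  | .sum a _, .vleft v => .sleft (shell a v)
  | .sum _ b, .vright v => .sright (shell b v)
  | .prod a b, .vpair v w => .spair (shell a v) (shell b w)
  | _, _ => .sole

/-- The ordered list of α-holes of a value at a type. -/
def holes (α : ℕ) : PTy → Val → List Val
  | .var n, v => if n = α then [v] else []
  | .sum a _, .vleft v => holes α a v
  | .sum _ b, .vright v => holes α b v
  | .prod a b, .vpair v w => holes α a v ++ holes α b w
  | _, _ => []

/-- Environment shells: per-variable shells. -/
def envshell (Δ : List PTy) (δ : List Val) : List Shell :=
  List.zipWith shell Δ δ

/-- Environment holes: concatenated α-holes across all variables. -/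
def envholes (α : ℕ) (Δ : List PTy) (δ : List Val) : List Val :=
  (List.zipWith (holes α) Δ δ).flatten

/-- The equality-pattern relation on value environments. -/
def EqPat (Δ : List PTy) (δ₁ δ₂ : List Val) : Prop :=
  envshell Δ δ₁ = envshell Δ δ₂ ∧
  ∀ (α : ℕ) (i j : ℕ) (h₁ k₁ h₂ k₂ : Val),
    (envholes α Δ δ₁)[i]? = some h₁ → (envholes α Δ δ₁)[j]? = some k₁ →
    (envholes α Δ δ₂)[i]? = some h₂ → (envholes α Δ δ₂)[j]? = some k₂ →
    (h₁ = k₁ ↔ h₂ = k₂)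

/-- Well-typedness of a value environment: δ : σ(Δ). -/
def EnvTy (σ : ℕ → PTy) (Δ : List PTy) (δ : List Val) : Prop :=
  List.Forall₂ (fun τ v => HasTy v (psubst σ τ)) Δ δ

/-- Value terms, possibly containing variables (de Bruijn style indices into Δ). -/
inductive Term : Type
  | sole : Term
  | tleft : Term → Term
  | tright : Term → Term
  | tpair : Term → Term → Term
  | var : ℕ → Term
deriving DecidableEq

/-- Denotation of a term under a value environment. -/
def denT : Term → List Val → Val
  | .sole, _ => .sole
  | .tleft t, δ => .vleft (denT t δ)
  | .tright t, δ => .vright (denT t δ)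
  | .tpair s t, δ => .vpair (denT s δ) (denT t δ)
  | .var n, δ => δ.getD n .sole

/-- Typing of terms under a type environment. -/
inductive TmTy : List PTy → Term → PTy → Prop
  | sole {Δ} : TmTy Δ .sole .unit
  | tleft {Δ t a b} : TmTy Δ t a → TmTy Δ (.tleft t) (.sum a b)
  | tright {Δ t a b} : TmTy Δ t b → TmTy Δ (.tright t) (.sum a b)
  | tpair {Δ s t a b} : TmTy Δ s a → TmTy Δ t b → TmTy Δ (.tpair s t) (.prod a b)
  | var {Δ n τ} : Δ[n]? = some τ → TmTy Δ (.var n) τ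

/-- Maximum number of occurrences of type variable α in a type. -/
def cnt (α : ℕ) : PTy → ℕ
  | .unit => 0
  | .sum a b => max (cnt α a) (cnt α b)
  | .prod a b => cnt α a + cnt α b
  | .var n => if n = α then 1 else 0

/-- Maximum number of occurrences of α in a type environment. -/
def cntEnv (α : ℕ) (Δ : List PTy) : ℕ := (Δ.map (cnt α)).sum

/-- Enumeration of the concrete values of a (monomorphic) type. -/
def enum : PTy → List Val
  | .unit => [.sole]
  | .sum a b => (enum a).map .vleft ++ (enum b).map .vright
  | .prod a b => (enum a).flatMap (fun v => (enum b).map (.vpair v))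
  | .var _ => []

-- auxiliary lemmas
section Aux

lemma holes_length_le (α : ℕ) : ∀ (τ : PTy) (v : Val), (holes α τ v).length ≤ cnt α τ := by
  intro τ
  induction τ with
  | unit => intro v; simp [holes, cnt]
  | var n => intro v; by_cases h : n = α <;> simp [holes, cnt, h]
  | sum a b iha ihb =>
    intro v
    cases v <;> simp only [holes, cnt, List.length_nil, Nat.zero_le]
    · exact le_max_of_le_left (iha _)
    · exact le_max_of_le_right (ihb _)
  | prod a b iha ihb =>
    intro v
    cases v <;> simp [holes, cnt]
    exact Nat.add_le_add (iha _) (ihb _)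

lemma envholes_length_le (α : ℕ) : ∀ (Δ : List PTy) (δ : List Val),
    (envholes α Δ δ).length ≤ cntEnv α Δ := by
  intro Δ
  induction Δ with
  | nil => intro δ; simp [envholes, cntEnv]
  | cons τ Δ ih =>
    intro δ
    cases δ with
    | nil => simp [envholes, cntEnv]
    | cons v δ =>
      simp only [envholes, cntEnv, List.zipWith_cons_cons, List.flatten_cons,
        List.length_append, List.map_cons, List.sum_cons]
      exact Nat.add_le_add (holes_length_le α τ v) (ih δ)

lemma holes_hasTy {σ : ℕ → PTy} {α : ℕ} : ∀ {τ : PTy} {v : Val}, HasTy v (psubst σ τ) →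
    ∀ h ∈ holes α τ v, HasTy h (σ α) := by
  intro τ
  induction τ with
  | unit => intro v _ h hh; simp [holes] at hh
  | var n =>
    intro v hv h hh
    simp [holes] at hh
    rcases hh with ⟨rfl, rfl⟩
    exact hv
  | sum a b iha ihb =>
    intro v hv h hh
    cases hv with
    | vleft hv => exact iha hv h hh
    | vright hv => exact ihb hv h hh
  | prod a b iha ihb =>
    intro v hv h hh
    cases hv with
    | vpair hv hw =>
      simp [holes] at hh
      rcases hh with hh | hh
      · exact iha hv h hh
      · exact ihb hw h hh

lemma envholes_hasTy {σ : ℕ → PTy} {α : ℕ} : ∀ {Δ : List PTy} {δ : List Val},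
    EnvTy σ Δ δ → ∀ h ∈ envholes α Δ δ, HasTy h (σ α) := by
  intro Δ
  induction Δ with
  | nil => intro δ _ h hh; cases δ <;> simp [envholes] at hh
  | cons τ Δ ih =>
    intro δ ht h hh
    cases ht with
    | cons hv ht =>
      simp only [envholes, List.zipWith_cons_cons, List.flatten_cons, List.mem_append] at hh
      rcases hh with hh | hh
      · exact holes_hasTy hv h hh
      · exact ih ht h hh

lemma holes_length_shell (α : ℕ) : ∀ (τ : PTy) (v w : Val), shell τ v = shell τ w →
    (holes α τ v).length = (holes α τ w).length := by
  intro τ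
  induction τ with
  | unit => intro v w _; cases v <;> cases w <;> simp [holes]
  | var n => intro v w _; by_cases h : n = α <;> simp [holes, h]
  | sum a b iha ihb =>
    intro v w hs
    cases v <;> cases w <;> simp_all [shell, holes]
    · exact iha _ _ hs
    · exact ihb _ _ hs
  | prod a b iha ihb =>
    intro v w hs
    cases v <;> cases w <;> simp_all [shell, holes]
    exact congrArg₂ (· + ·) (iha _ _ hs.1) (ihb _ _ hs.2)

lemma envholes_length_eq (α : ℕ) : ∀ (Δ : List PTy) (δ₁ δ₂ : List Val),
    envshell Δ δ₁ = envshell Δ δ₂ →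
    (envholes α Δ δ₁).length = (envholes α Δ δ₂).length := by
  intro Δ
  induction Δ with
  | nil => intro δ₁ δ₂ _; simp [envholes]
  | cons τ Δ ih =>
    intro δ₁ δ₂ hs
    cases δ₁ with
    | nil =>
      cases δ₂ with
      | nil => rfl
      | cons v δ₂ => simp [envshell] at hs
    | cons v₁ δ₁ =>
      cases δ₂ with
      | nil => simp [envshell] at hs
      | cons v₂ δ₂ =>
        simp only [envshell, List.zipWith_cons_cons, List.cons.injEq] at hs
        simp only [envholes, List.zipWith_cons_cons, List.flatten_cons, List.length_append]
        exact congrArg₂ (· + ·) (holes_length_shell α τ v₁ v₂ hs.1) (ih δ₁ δ₂ hs.2)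

lemma mem_enum_of_hasTy : ∀ {v : Val} {t : PTy}, HasTy v t → v ∈ enum t := by
  intro v t h
  induction h with
  | sole => simp [enum]
  | vleft _ ih => simp only [enum, List.mem_append, List.mem_map]; exact Or.inl ⟨_, ih, rfl⟩
  | vright _ ih => simp only [enum, List.mem_append, List.mem_map]; exact Or.inr ⟨_, ih, rfl⟩
  | vpair _ _ ih1 ih2 =>
      simp only [enum, List.mem_flatMap, List.mem_map]; exact ⟨_, ih1, _, ih2, rfl⟩

lemma hasTy_finite (t : PTy) : {v : Val | HasTy v t}.Finite :=
  Set.Finite.subset (List.finite_toSet (enum t)) (fun _ h => mem_enum_of_hasTy h)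

end Aux

lemma hasTy_of_mem_enum : ∀ (t : PTy) (v : Val), v ∈ enum t → HasTy v t := by
  intro t
  induction t with
  | unit => intro v hv; simp [enum] at hv; subst hv; exact .sole
  | var n => intro v hv; simp [enum] at hv
  | sum a b iha ihb =>
    intro v hv
    simp only [enum, List.mem_append, List.mem_map] at hv
    rcases hv with ⟨w, hw, rfl⟩ | ⟨w, hw, rfl⟩
    · exact .vleft (iha w hw)
    · exact .vright (ihb w hw)
  | prod a b iha ihb =>
    intro v hv
    simp only [enum, List.mem_flatMap, List.mem_map] at hv
    rcases hv with ⟨w, hw, u, hu, rfl⟩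
    exact .vpair (iha w hw) (ihb u hu)

lemma card_le_encard (t : PTy) {n : ℕ} (h : n ≤ Nat.card {v : Val // HasTy v t}) :
    (n : ℕ∞) ≤ {v : Val | HasTy v t}.encard := by
  have h' : n ≤ {v : Val | HasTy v t}.ncard := by
    rwa [← Nat.card_coe_set_eq]
  have hf : {v : Val | HasTy v t}.Finite := hasTy_finite t
  calc (n : ℕ∞) ≤ ({v : Val | HasTy v t}.ncard : ℕ∞) := by exact_mod_cast h'
    _ = _ := hf.cast_ncard_eq

/-- Replace each hole value using `f`. -/
def mapHoles (f : ℕ → Val → Val) : PTy → Val → Val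
  | .var n, v => f n v
  | .sum a _, .vleft v => .vleft (mapHoles f a v)
  | .sum _ b, .vright v => .vright (mapHoles f b v)
  | .prod a b, .vpair v w => .vpair (mapHoles f a v) (mapHoles f b w)
  | _, v => v

lemma mapHoles_hasTy {σ₁ σ₂ : ℕ → PTy} {f : ℕ → Val → Val} :
    ∀ {τ : PTy} {v : Val}, HasTy v (psubst σ₁ τ) →
    (∀ n h, h ∈ holes n τ v → HasTy (f n h) (σ₂ n)) →
    HasTy (mapHoles f τ v) (psubst σ₂ τ) := by
  intro τ
  induction τ with
  | unit => intro v hv _; cases hv; exact .sole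
  | var n => intro v hv hf; exact hf n v (by simp [holes])
  | sum a b iha ihb =>
    intro v hv hf
    cases hv with
    | vleft hv => exact .vleft (iha hv (fun n h hh => hf n h hh))
    | vright hv => exact .vright (ihb hv (fun n h hh => hf n h hh))
  | prod a b iha ihb =>
    intro v hv hf
    cases hv with
    | vpair hv hw =>
      exact .vpair (iha hv (fun n h hh => hf n h (by simp [holes]; exact Or.inl hh)))
        (ihb hw (fun n h hh => hf n h (by simp [holes]; exact Or.inr hh)))

lemma shell_mapHoles (f : ℕ → Val → Val) : ∀ (τ : PTy) (v : Val),
    shell τ (mapHoles f τ v) = shell τ v := by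
  intro τ
  induction τ with
  | unit => intro v; cases v <;> rfl
  | var n => intro v; rfl
  | sum a b iha ihb => intro v; cases v <;> simp [mapHoles, shell, iha, ihb]
  | prod a b iha ihb => intro v; cases v <;> simp [mapHoles, shell, iha, ihb]

lemma holes_mapHoles (f : ℕ → Val → Val) (α : ℕ) : ∀ (τ : PTy) (v : Val),
    holes α τ (mapHoles f τ v) = (holes α τ v).map (f α) := by
  intro τ
  induction τ with
  | unit => intro v; cases v <;> rfl
  | var n =>
    intro v
    by_cases h : n = α <;> simp [mapHoles, holes, h]
  | sum a b iha ihb => intro v; cases v <;> simp [mapHoles, holes, iha, ihb]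
  | prod a b iha ihb => intro v; cases v <;> simp [mapHoles, holes, iha, ihb]

open Classical in
lemma extend_injOn {A₀ A B : Set Val} (hA₀ : A₀ ⊆ A) (hAfin : A.Finite) (g : Val → Val)
    (hg : Set.InjOn g A₀) (hgB : Set.MapsTo g A₀ B)
    (hcard : A.encard ≤ B.encard) :
    ∃ f : Val → Val, Set.InjOn f A ∧ Set.MapsTo f A B ∧ Set.EqOn f g A₀ := by
  have hA₀fin : A₀.Finite := hAfin.subset hA₀
  have himg : (g '' A₀).encard = A₀.encard := hg.encard_image
  have h1 : (A \ A₀).encard + A₀.encard = A.encard := by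
    rw [Set.encard_diff_add_encard_of_subset hA₀]
  have h2 : B.encard ≤ (B \ g '' A₀).encard + A₀.encard := by
    rw [← himg]
    exact le_trans (Set.encard_le_encard (by intro x hx; by_cases h : x ∈ g '' A₀ <;>
      simp [Set.mem_union, Set.mem_diff, hx, h])) (Set.encard_union_le _ _)
  have h3 : (A \ A₀).encard ≤ (B \ g '' A₀).encard := by
    have := le_trans (h1.le.trans hcard) h2
    exact WithTop.le_of_add_le_add_right hA₀fin.encard_lt_top.ne this
  haveI : Nonempty Val := ⟨.sole⟩
  obtain ⟨e, heB, heinj⟩ := Set.Finite.exists_injOn_of_encard_le hAfin.diff h3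
  rw [Set.subset_def] at heB
  simp only [Set.mem_preimage] at heB
  refine ⟨fun x => if x ∈ A₀ then g x else e x, ?_, ?_, ?_⟩
  · intro x hx y hy hxy
    by_cases hx0 : x ∈ A₀ <;> by_cases hy0 : y ∈ A₀ <;> simp only [hx0, hy0, if_pos, if_neg,
      if_true, if_false] at hxy
    · exact hg hx0 hy0 hxy
    · exact absurd (hxy ▸ Set.mem_image_of_mem g hx0) (heB _ ⟨hy, hy0⟩).2
    · exact absurd (hxy ▸ Set.mem_image_of_mem g hy0) (heB _ ⟨hx, hx0⟩).2
    · exact heinj ⟨hx, hx0⟩ ⟨hy, hy0⟩ hxy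
  · intro x hx
    by_cases hx0 : x ∈ A₀ <;> simp only [hx0, if_true, if_false]
    · exact hgB hx0
    · exact (heB _ ⟨hx, hx0⟩).1
  · intro x hx; simp [hx]

lemma encard_list_le (l : List Val) : ({x | x ∈ l} : Set Val).encard ≤ (l.length : ℕ∞) := by
  have h1 : ({x | x ∈ l} : Set Val) = ↑l.toFinset := by ext x; simp
  rw [h1, Set.encard_coe_eq_coe_finsetCard]
  exact_mod_cast l.toFinset_card_le


/-- Equality-pattern extension: if δ₁ ⇌_Δ δ₂ and σ₂ gives every type variable α at
least as many values as the number of α-occurrences in Δ, x:τ, then any value v₁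
of type σ₁(τ) can be matched by some v₂ of type σ₂(τ) extending the pattern. -/
theorem stmt_9 (σ₁ σ₂ : ℕ → PTy) (Δ : List PTy) (τ : PTy) (δ₁ δ₂ : List Val) (v₁ : Val)
    (ht₁ : EnvTy σ₁ Δ δ₁) (ht₂ : EnvTy σ₂ Δ δ₂)
    (hv₁ : HasTy v₁ (psubst σ₁ τ))
    (hp : EqPat Δ δ₁ δ₂)
    (hsize : ∀ α : ℕ, cnt α τ + cntEnv α Δ ≤ Nat.card {v : Val // HasTy v (σ₂ α)}) :
    ∃ v₂ : Val, HasTy v₂ (psubst σ₂ τ) ∧ EqPat (τ :: Δ) (v₁ :: δ₁) (v₂ :: δ₂) := by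

  classical
  have hlen : ∀ α, (envholes α Δ δ₂).length = (envholes α Δ δ₁).length :=
    fun α => (envholes_length_eq α Δ δ₁ δ₂ hp.1).symm
  set g : ℕ → Val → Val :=
    fun α x => (envholes α Δ δ₂).getD ((envholes α Δ δ₁).idxOf x) .sole with hg
  have gspec : ∀ (α i : ℕ) (h : Val), (envholes α Δ δ₁)[i]? = some h →
      (envholes α Δ δ₂)[i]? = some (g α h) := by
    intro α i h h1
    have hi : i < (envholes α Δ δ₁).length := by
      by_contra hc
      rw [List.getElem?_eq_none (le_of_not_gt hc)] at h1
      cases h1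
    have hmem : h ∈ envholes α Δ δ₁ := List.mem_of_getElem? h1
    have hidx : (envholes α Δ δ₁).idxOf h < (envholes α Δ δ₁).length :=
      List.idxOf_lt_length_iff.mpr hmem
    have hidx1 : (envholes α Δ δ₁)[(envholes α Δ δ₁).idxOf h]? = some h := by
      rw [List.getElem?_eq_getElem hidx, List.getElem_idxOf]
    have hi2 : i < (envholes α Δ δ₂).length := by rw [hlen]; exact hi
    have hidx2 : (envholes α Δ δ₁).idxOf h < (envholes α Δ δ₂).length := by
      rw [hlen]; exact hidx
    have hgval : g α h = (envholes α Δ δ₂)[(envholes α Δ δ₁).idxOf h] := by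
      rw [hg]; exact List.getD_eq_getElem _ _ hidx2
    have := hp.2 α i ((envholes α Δ δ₁).idxOf h) h h
      ((envholes α Δ δ₂)[i]'hi2) ((envholes α Δ δ₂)[(envholes α Δ δ₁).idxOf h]'hidx2)
      h1 hidx1 (List.getElem?_eq_getElem hi2) (List.getElem?_eq_getElem hidx2)
    rw [List.getElem?_eq_getElem hi2, hgval, this.mp rfl]
  have key : ∀ α : ℕ, ∃ f : Val → Val,
      Set.InjOn f ({x | x ∈ holes α τ v₁} ∪ {x | x ∈ envholes α Δ δ₁}) ∧
      Set.MapsTo f ({x | x ∈ holes α τ v₁} ∪ {x | x ∈ envholes α Δ δ₁})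
        {v | HasTy v (σ₂ α)} ∧
      Set.EqOn f (g α) {x | x ∈ envholes α Δ δ₁} := by
    intro α
    apply extend_injOn (Set.subset_union_right)
      ((List.finite_toSet _).union (List.finite_toSet _))
    · -- InjOn g
      intro x hx y hy hxy
      have hix : (envholes α Δ δ₁)[(envholes α Δ δ₁).idxOf x]? = some x := by
        rw [List.getElem?_eq_getElem (List.idxOf_lt_length_iff.mpr hx), List.getElem_idxOf]
      have hiy : (envholes α Δ δ₁)[(envholes α Δ δ₁).idxOf y]? = some y := by
        rw [List.getElem?_eq_getElem (List.idxOf_lt_length_iff.mpr hy), List.getElem_idxOf]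
      have h2x := gspec α _ x hix
      have h2y := gspec α _ y hiy
      exact (hp.2 α _ _ x y (g α x) (g α y) hix hiy h2x h2y).mpr (by rw [hxy])
    · -- MapsTo g
      intro x hx
      have hix : (envholes α Δ δ₁)[(envholes α Δ δ₁).idxOf x]? = some x := by
        rw [List.getElem?_eq_getElem (List.idxOf_lt_length_iff.mpr hx), List.getElem_idxOf]
      exact envholes_hasTy ht₂ _ (List.mem_of_getElem? (gspec α _ x hix))
    · -- cardinality
      calc ({x | x ∈ holes α τ v₁} ∪ {x | x ∈ envholes α Δ δ₁} : Set Val).encard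
          ≤ ({x | x ∈ holes α τ v₁} : Set Val).encard
            + ({x | x ∈ envholes α Δ δ₁} : Set Val).encard := Set.encard_union_le _ _
        _ ≤ ((holes α τ v₁).length : ℕ∞) + ((envholes α Δ δ₁).length : ℕ∞) :=
            add_le_add (encard_list_le _) (encard_list_le _)
        _ ≤ (cnt α τ : ℕ∞) + (cntEnv α Δ : ℕ∞) := by
            exact_mod_cast add_le_add (holes_length_le α τ v₁) (envholes_length_le α Δ δ₁)
        _ = ((cnt α τ + cntEnv α Δ : ℕ) : ℕ∞) := by push_cast; ring
        _ ≤ _ := card_le_encard _ (hsize α)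
  choose F hFinj hFmaps hFeq using key
  refine ⟨mapHoles F τ v₁, ?_, ?_, ?_⟩
  · exact mapHoles_hasTy hv₁ (fun n h hh => hFmaps n (Or.inl hh))
  · -- envshell equality
    simp only [envshell, List.zipWith_cons_cons]
    rw [shell_mapHoles]; exact congrArg _ hp.1
  · -- hole pattern
    have hL2 : ∀ α, envholes α Δ δ₂ = (envholes α Δ δ₁).map (F α) := by
      intro α
      apply List.ext_getElem?
      intro i
      by_cases hi : i < (envholes α Δ δ₁).length
      · have h1 : (envholes α Δ δ₁)[i]? = some ((envholes α Δ δ₁)[i]'hi) :=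
          List.getElem?_eq_getElem hi
        rw [gspec α i _ h1, List.getElem?_map, h1, Option.map_some]
        rw [hFeq α (List.getElem_mem _)]
      · rw [List.getElem?_eq_none (by rw [hlen]; exact le_of_not_gt hi),
          List.getElem?_eq_none (by rw [List.length_map]; exact le_of_not_gt hi)]
    have hc : ∀ α, envholes α (τ :: Δ) (mapHoles F τ v₁ :: δ₂)
        = (envholes α (τ :: Δ) (v₁ :: δ₁)).map (F α) := by
      intro α
      simp only [envholes, List.zipWith_cons_cons, List.flatten_cons]
      rw [List.map_append]
      congr 1
      · exact holes_mapHoles F α τ v₁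
      · exact hL2 α
    intro α i j h₁ k₁ h₂ k₂ e1 e2 e3 e4
    rw [hc α, List.getElem?_map, e1, Option.map_some] at e3
    rw [hc α, List.getElem?_map, e2, Option.map_some] at e4
    obtain rfl : F α h₁ = h₂ := by injection e3
    obtain rfl : F α k₁ = k₂ := by injection e4
    have hmem : ∀ {x}, x ∈ envholes α (τ :: Δ) (v₁ :: δ₁) →
        x ∈ ({x | x ∈ holes α τ v₁} ∪ {x | x ∈ envholes α Δ δ₁} : Set Val) := by
      intro x hx
      simp only [envholes, List.zipWith_cons_cons, List.flatten_cons, List.mem_append] at hx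
      exact hx
    constructor
    · intro h; rw [h]
    · intro h
      exact hFinj α (hmem (List.mem_of_getElem? e1)) (hmem (List.mem_of_getElem? e2)) h
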